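/- Let 𝖧 be a complex Hilbert space, a a bounded operator on 𝖧, γ ≥ 0 and θ ∈ ℝ. Set L₁ = L₂ = √γ·a and S = e^{iθ}·1 (a scalar multiple of the identity operator). Then the 1-channel series product (1, L₂, 0) ◁ ( (S, 0, 0) ◁ (1, L₁, 0) ) equals ( e^{iθ}·1 , (1 + e^{iθ})·√γ·a , γ·sin(θ)·a†a ), and moreover it also equals (S, 0, 0) ◁ ( (1, e^{−iθ}·L₂, 0) ◁ (1, L₁, 0) ), i.e. the phase shift can be moved past the second mirror coupling. -/

import Mathlib

noncomputable section

variable {E : Type*} [NormedAddCommGroup E] [InnerProductSpace ℂ E] [CompleteSpace E]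

/-- Scattering component of the 1-channel series product `G₂ ◁ G₁`. -/
def series1S (S₂ S₁ : E →L[ℂ] E) : E →L[ℂ] E := S₂ * S₁

/-- Coupling component of the 1-channel series product `G₂ ◁ G₁`: `L₂ + S₂L₁`. -/
def series1L (S₂ L₂ L₁ : E →L[ℂ] E) : E →L[ℂ] E := L₂ + S₂ * L₁

/-- Hamiltonian component of the 1-channel series product `G₂ ◁ G₁`:
`H₁ + H₂ + (1/(2i))(L₂*S₂L₁ − L₁*S₂*L₂)`. -/
def series1H (S₂ L₂ L₁ H₁ H₂ : E →L[ℂ] E) : E →L[ℂ] E :=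
  H₁ + H₂ + ((2 * Complex.I)⁻¹) • (star L₂ * S₂ * L₁ - star L₁ * star S₂ * L₂)

/- Gough–James, Section VI.A (all-optical feedback, Wiseman–Milburn):
with `L₁ = L₂ = √γ a` and `S = e^{iθ}·1`, the closed loop
`(1, L₂, 0) ◁ ((S,0,0) ◁ (1, L₁, 0))` equals
`(e^{iθ}·1, (1 + e^{iθ})√γ a, γ sin θ · a†a)`, and also equals
`(S,0,0) ◁ ((1, e^{−iθ}L₂, 0) ◁ (1, L₁, 0))`. -/
theorem all_optical_feedback (a : E →L[ℂ] E) (γ θ : ℝ) (hγ : 0 ≤ γ) :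
    (series1S (1 : E →L[ℂ] E)
        (series1S (Complex.exp (Complex.I * θ) • (1 : E →L[ℂ] E)) 1) =
      Complex.exp (Complex.I * θ) • (1 : E →L[ℂ] E) ∧
    series1L (1 : E →L[ℂ] E) ((Real.sqrt γ : ℂ) • a)
        (series1L (Complex.exp (Complex.I * θ) • (1 : E →L[ℂ] E)) 0
          ((Real.sqrt γ : ℂ) • a)) =
      ((1 + Complex.exp (Complex.I * θ)) * (Real.sqrt γ : ℂ)) • a ∧
    series1H (1 : E →L[ℂ] E) ((Real.sqrt γ : ℂ) • a)
        (series1L (Complex.exp (Complex.I * θ) • (1 : E →L[ℂ] E)) 0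
          ((Real.sqrt γ : ℂ) • a))
        (series1H (Complex.exp (Complex.I * θ) • (1 : E →L[ℂ] E)) 0
          ((Real.sqrt γ : ℂ) • a) 0 0) 0 =
      ((γ * Real.sin θ : ℝ) : ℂ) • (star a * a)) ∧
    (series1S (1 : E →L[ℂ] E)
        (series1S (Complex.exp (Complex.I * θ) • (1 : E →L[ℂ] E)) 1) =
      series1S (Complex.exp (Complex.I * θ) • (1 : E →L[ℂ] E))
        (series1S 1 1) ∧
    series1L (1 : E →L[ℂ] E) ((Real.sqrt γ : ℂ) • a)
        (series1L (Complex.exp (Complex.I * θ) • (1 : E →L[ℂ] E)) 0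
          ((Real.sqrt γ : ℂ) • a)) =
      series1L (Complex.exp (Complex.I * θ) • (1 : E →L[ℂ] E)) 0
        (series1L 1 (Complex.exp (-(Complex.I * θ)) • ((Real.sqrt γ : ℂ) • a))
          ((Real.sqrt γ : ℂ) • a)) ∧
    series1H (1 : E →L[ℂ] E) ((Real.sqrt γ : ℂ) • a)
        (series1L (Complex.exp (Complex.I * θ) • (1 : E →L[ℂ] E)) 0
          ((Real.sqrt γ : ℂ) • a))
        (series1H (Complex.exp (Complex.I * θ) • (1 : E →L[ℂ] E)) 0
          ((Real.sqrt γ : ℂ) • a) 0 0) 0 =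
      series1H (Complex.exp (Complex.I * θ) • (1 : E →L[ℂ] E)) 0
        (series1L 1 (Complex.exp (-(Complex.I * θ)) • ((Real.sqrt γ : ℂ) • a))
          ((Real.sqrt γ : ℂ) • a))
        (series1H 1 (Complex.exp (-(Complex.I * θ)) • ((Real.sqrt γ : ℂ) • a))
          ((Real.sqrt γ : ℂ) • a) 0 0) 0) := by
  have h : ((Real.sqrt γ : ℂ)) * (Real.sqrt γ) = (γ : ℂ) := by
    rw [← Complex.ofReal_mul, Real.mul_self_sqrt hγ]
  have h2 : Complex.exp (Complex.I * θ) - Complex.exp (-(Complex.I * θ))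
      = 2 * Complex.I * (Real.sin θ : ℂ) := by
    rw [mul_comm Complex.I (θ:ℂ), ← neg_mul, Complex.exp_mul_I, Complex.exp_mul_I,
      Complex.cos_neg, Complex.sin_neg, ← Complex.ofReal_sin]
    ring
  have hee : Complex.exp (Complex.I * θ) * Complex.exp (-(Complex.I * θ)) = 1 := by
    rw [← Complex.exp_add, add_neg_cancel, Complex.exp_zero]
  have hI := Complex.I_ne_zero
  have hHL : series1H (1 : E →L[ℂ] E) ((Real.sqrt γ : ℂ) • a)
        (series1L (Complex.exp (Complex.I * θ) • (1 : E →L[ℂ] E)) 0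
          ((Real.sqrt γ : ℂ) • a))
        (series1H (Complex.exp (Complex.I * θ) • (1 : E →L[ℂ] E)) 0
          ((Real.sqrt γ : ℂ) • a) 0 0) 0 =
      ((γ * Real.sin θ : ℝ) : ℂ) • (star a * a) := by
    simp only [series1L, series1H, star_zero, zero_mul, mul_zero, sub_zero, zero_sub,
      smul_zero, add_zero, zero_add, star_smul, star_one, smul_mul_assoc, mul_smul_comm,
      one_mul, mul_one, smul_smul, ← smul_sub, ← sub_smul]
    congr 1
    simp only [Complex.star_def, map_mul, Complex.conj_ofReal, ← Complex.exp_conj,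
      Complex.conj_I]
    push_cast [Complex.ofReal_sin] at h2 ⊢
    field_simp
    linear_combination Complex.exp (Complex.I * θ) * h - Complex.exp (-(Complex.I*θ)) * h + γ * h2
  have hHR : series1H (Complex.exp (Complex.I * θ) • (1 : E →L[ℂ] E)) 0
        (series1L 1 (Complex.exp (-(Complex.I * θ)) • ((Real.sqrt γ : ℂ) • a))
          ((Real.sqrt γ : ℂ) • a))
        (series1H 1 (Complex.exp (-(Complex.I * θ)) • ((Real.sqrt γ : ℂ) • a))
          ((Real.sqrt γ : ℂ) • a) 0 0) 0 =
      ((γ * Real.sin θ : ℝ) : ℂ) • (star a * a) := by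
    simp only [series1L, series1H, star_zero, zero_mul, mul_zero, sub_zero, zero_sub,
      smul_zero, add_zero, zero_add, star_smul, star_one, smul_mul_assoc, mul_smul_comm,
      one_mul, mul_one, smul_smul, ← smul_sub, ← sub_smul]
    congr 1
    simp only [Complex.star_def, map_mul, Complex.conj_ofReal, ← Complex.exp_conj,
      Complex.conj_I]
    push_cast [Complex.ofReal_sin] at h2 ⊢
    field_simp
    simp only [map_neg, map_mul, Complex.conj_I, Complex.conj_ofReal, neg_mul, neg_neg]
    linear_combination Complex.exp (Complex.I * θ) * h - Complex.exp (-(Complex.I*θ)) * h + γ * h2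
  refine ⟨⟨?_, ?_, hHL⟩, ?_, ?_, hHL.trans hHR.symm⟩
  · simp [series1S, smul_mul_assoc]
  · simp only [series1L, one_mul, zero_add, smul_mul_assoc, mul_smul_comm, smul_smul,
      mul_one]
    rw [← add_smul]
    ring_nf
  · simp [series1S, smul_mul_assoc]
  · simp only [series1L, one_mul, zero_add, smul_mul_assoc, mul_smul_comm, smul_smul,
      mul_one, smul_add]
    congr 1
    · rw [← mul_assoc, hee, one_mul]
    · rw [mul_comm]
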